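/- Let C = [C_1,…,C_r] be the W-characteristic set of ⟨P⟩ with I_i = ini(C_i) for 1 ≤ i ≤ r. Then Zero(C) \ Zero({I_1⋯I_r}) ⊆ Zero(P) ⊆ Zero(C). -/

import Mathlib

open MvPolynomial

namespace CharSets

variable {n : ℕ} {K : Type*} [Field K]

/-- The coefficient of `x_i ^ d` in `F`, as a polynomial in the remaining variables. -/
noncomputable def coefv (i : Fin n) (d : ℕ) (F : MvPolynomial (Fin n) K) :
    MvPolynomial (Fin n) K :=
  ∑ m ∈ F.support.filter (fun m => m i = d), monomial (Finsupp.erase i m) (F.coeff m)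

/-- The leading coefficient of `F` with respect to the variable `x_i`. -/
noncomputable def lcv (i : Fin n) (F : MvPolynomial (Fin n) K) : MvPolynomial (Fin n) K :=
  coefv i (F.degreeOf i) F

/-- Auxiliary pseudo-division: computes (pseudo-quotient, pseudo-remainder) pairs,
with the first argument as fuel; the total power of the leading coefficient used is
exactly the fuel, so that starting with fuel `max(l - m + 1, 0)` yields the pair
`(Q, R)` of the unique representation `lc(F,x_i)^q • G = Q*F + R` with
`q = max(l - m + 1, 0)` and `deg(R, x_i) < deg(F, x_i)`. -/
noncomputable def pdivAux (i : Fin n) (F : MvPolynomial (Fin n) K) :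
    ℕ → MvPolynomial (Fin n) K × MvPolynomial (Fin n) K →
      MvPolynomial (Fin n) K × MvPolynomial (Fin n) K
  | 0, QR => QR
  | q + 1, QR =>
    if (QR.2).degreeOf i < F.degreeOf i then
      (lcv i F ^ (q + 1) * QR.1, lcv i F ^ (q + 1) * QR.2)
    else
      pdivAux i F q
        (lcv i F * QR.1 +
            coefv i ((QR.2).degreeOf i) QR.2 * X i ^ ((QR.2).degreeOf i - F.degreeOf i),
          lcv i F * QR.2 -
            coefv i ((QR.2).degreeOf i) QR.2 * X i ^ ((QR.2).degreeOf i - F.degreeOf i) * F)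

/-- The pseudo-remainder `prem(G, F, x_i)`. -/
noncomputable def prem (G F : MvPolynomial (Fin n) K) (i : Fin n) : MvPolynomial (Fin n) K :=
  (pdivAux i F (G.degreeOf i + 1 - F.degreeOf i) (0, G)).2

/-- The pseudo-quotient `pquo(G, F, x_i)`. -/
noncomputable def pquo (G F : MvPolynomial (Fin n) K) (i : Fin n) : MvPolynomial (Fin n) K :=
  (pdivAux i F (G.degreeOf i + 1 - F.degreeOf i) (0, G)).1

/-- The class of `P`: the largest index (1-based) of a variable actually occurring in `P`;
the class of a constant is `0`. -/
noncomputable def cls (P : MvPolynomial (Fin n) K) : ℕ :=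
  P.vars.sup fun i => (i : ℕ) + 1

/-- The degree of `G` in the leading variable of `P` (`0` if `P` is constant). -/
noncomputable def degLv (G P : MvPolynomial (Fin n) K) : ℕ :=
  if h : P.vars.Nonempty then G.degreeOf (P.vars.max' h) else 0

/-- `G` is R-reduced with respect to `P`, i.e. `deg(G, lv(P)) < deg(P, lv(P))`. -/
def RReduced (G P : MvPolynomial (Fin n) K) : Prop :=
  degLv G P < degLv P P

/-- The initial of `P`: its leading coefficient w.r.t. its leading variable. -/
noncomputable def ini (P : MvPolynomial (Fin n) K) : MvPolynomial (Fin n) K :=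
  if h : P.vars.Nonempty then lcv (P.vars.max' h) P else P

/-- Pseudo-remainder of `G` w.r.t. `F` in the leading variable of `F`
(in case `F` is constant, `m = 0` and the pseudo-remainder is `0`). -/
noncomputable def premLv (G F : MvPolynomial (Fin n) K) : MvPolynomial (Fin n) K :=
  if h : F.vars.Nonempty then prem G F (F.vars.max' h) else 0

/-- Pseudo-quotient of `G` w.r.t. `F` in the leading variable of `F`. -/
noncomputable def pquoLv (G F : MvPolynomial (Fin n) K) : MvPolynomial (Fin n) K :=
  if h : F.vars.Nonempty then pquo G F (F.vars.max' h) else 0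

/-- Iterated pseudo-remainder with respect to a triangular set `[T_1, …, T_r]`:
`prem(P, T) = prem(⋯prem(P, T_r, lv(T_r)), …, T_1, lv(T_1))`. -/
noncomputable def premTS (P : MvPolynomial (Fin n) K) (L : List (MvPolynomial (Fin n) K)) :
    MvPolynomial (Fin n) K :=
  L.foldr (fun T acc => premLv acc T) P

/-- The Sylvester matrix of `F` and `G` with respect to the variable `x_i`. -/
noncomputable def sylvester (i : Fin n) (F G : MvPolynomial (Fin n) K) :
    Matrix (Fin (G.degreeOf i + F.degreeOf i)) (Fin (G.degreeOf i + F.degreeOf i))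
      (MvPolynomial (Fin n) K) :=
  Matrix.of fun r c =>
    if (r : ℕ) < G.degreeOf i then
      if (r : ℕ) ≤ (c : ℕ) ∧ (c : ℕ) ≤ (r : ℕ) + F.degreeOf i then
        coefv i (F.degreeOf i + (r : ℕ) - (c : ℕ)) F
      else 0
    else
      if (r : ℕ) - G.degreeOf i ≤ (c : ℕ) ∧ (c : ℕ) ≤ (r : ℕ) then
        coefv i (G.degreeOf i + ((r : ℕ) - G.degreeOf i) - (c : ℕ)) G
      else 0

/-- The resultant `res(F, G, x_i)` of `F` and `G` w.r.t. `x_i`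
(the determinant of the Sylvester matrix). -/
noncomputable def resv (F G : MvPolynomial (Fin n) K) (i : Fin n) : MvPolynomial (Fin n) K :=
  (sylvester i F G).det

/-- Resultant of `F` and `G` w.r.t. the leading variable of `G`. -/
noncomputable def resLv (F G : MvPolynomial (Fin n) K) : MvPolynomial (Fin n) K :=
  if h : G.vars.Nonempty then resv F G (G.vars.max' h) else F

/-- Iterated resultant with respect to a triangular set:
`res(F, T) = res(⋯res(F, T_r, lv(T_r)), …, T_1, lv(T_1))`. -/
noncomputable def resTS (F : MvPolynomial (Fin n) K) (L : List (MvPolynomial (Fin n) K)) :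
    MvPolynomial (Fin n) K :=
  L.foldr (fun T acc => resLv acc T) F

/-- A triangular set: a nonempty ordered set of nonconstant polynomials with
strictly increasing classes. -/
def TriangularSet (L : List (MvPolynomial (Fin n) K)) : Prop :=
  L ≠ [] ∧ (∀ T ∈ L, 0 < cls T) ∧ L.Chain' fun A B => cls A < cls B

/-- An ascending set: either a single nonzero constant, or a triangular set in which
every later element is R-reduced with respect to every earlier one. -/
def AscendingSet (L : List (MvPolynomial (Fin n) K)) : Prop :=
  (∃ a : K, a ≠ 0 ∧ L = [MvPolynomial.C a]) ∨
    (TriangularSet L ∧ L.Pairwise fun A B => RReduced B A)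

/-- `F` has lower rank than `G`. -/
def rkLT (F G : MvPolynomial (Fin n) K) : Prop :=
  cls F < cls G ∨ (cls F = cls G ∧ 0 < cls F ∧ degLv F F < degLv G G)

/-- `F` and `G` have the same rank: neither has lower rank than the other. -/
def rkEQ (F G : MvPolynomial (Fin n) K) : Prop :=
  ¬ rkLT F G ∧ ¬ rkLT G F

/-- `B` has lower rank than `A` (as ascending sets). -/
def ascLT (B A : List (MvPolynomial (Fin n) K)) : Prop :=
  (∃ j, j < min A.length B.length ∧
      (∀ i, i < j → rkEQ (A.getD i 0) (B.getD i 0)) ∧ rkLT (B.getD j 0) (A.getD j 0)) ∨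
    (A.length < B.length ∧ ∀ i, i < A.length → rkEQ (A.getD i 0) (B.getD i 0))

/-- A Ritt characteristic set of the ideal `I`: an ascending set contained in `I`
of minimal rank among all ascending sets contained in `I`. -/
def RittCharSet (I : Ideal (MvPolynomial (Fin n) K)) (A : List (MvPolynomial (Fin n) K)) :
    Prop :=
  AscendingSet A ∧ (∀ a ∈ A, a ∈ I) ∧
    ∀ B : List (MvPolynomial (Fin n) K), AscendingSet B → (∀ b ∈ B, b ∈ I) → ¬ ascLT B A

/-- The saturated ideal of a triangular set, as a set of polynomials. -/
def satTS (L : List (MvPolynomial (Fin n) K)) : Set (MvPolynomial (Fin n) K) :=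
  {F | ∃ q : ℕ, 0 < q ∧ (L.map ini).prod ^ q * F ∈ Ideal.span {T | T ∈ L}}

/-- A regular set: a triangular set such that `res(ini(T_j), [T_1, …, T_{j-1}]) ≠ 0`
for `j = 2, …, r`. -/
def RegularSet (L : List (MvPolynomial (Fin n) K)) : Prop :=
  TriangularSet L ∧
    ∀ j : ℕ, 0 < j → j < L.length → resTS (ini (L.getD j 0)) (L.take j) ≠ 0

/-- A normal triangular set: `deg(ini(T_j), lv(T_i)) = 0` for all `i < j`. -/
def NormalSet (L : List (MvPolynomial (Fin n) K)) : Prop :=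
  TriangularSet L ∧ L.Pairwise fun A B => degLv (ini B) A = 0

/-- The purely lexicographical order on monomials determined by `x_1 < ⋯ < x_n`. -/
def plexLT (a b : Fin n →₀ ℕ) : Prop :=
  ∃ k : Fin n, a k < b k ∧ ∀ j : Fin n, k < j → a j = b j

/-- `m` is the leading monomial of `P` w.r.t. the plex order. -/
def IsLpp (P : MvPolynomial (Fin n) K) (m : Fin n →₀ ℕ) : Prop :=
  m ∈ P.support ∧ ∀ m' ∈ P.support, m' ≠ m → plexLT m' m

/-- `G` is the reduced (Buchberger–)Gröbner basis of the ideal `I` w.r.t. the plex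
term order determined by `x_1 < ⋯ < x_n`: its elements are nonzero monic members of `I`,
the leading monomial of every nonzero member of `I` is divisible by the leading monomial
of some element of `G`, every element of `G` is B-reduced w.r.t. the others, and `G`
generates `I`. -/
def IsReducedGB (I : Ideal (MvPolynomial (Fin n) K)) (G : Finset (MvPolynomial (Fin n) K)) :
    Prop :=
  (∀ g ∈ G, g ∈ I ∧ g ≠ 0 ∧ ∀ m, IsLpp g m → g.coeff m = 1) ∧
    (∀ F ∈ I, F ≠ 0 → ∃ g ∈ G, ∃ mg mF, IsLpp g mg ∧ IsLpp F mF ∧ mg ≤ mF) ∧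
    (∀ g ∈ G, ∀ g' ∈ G, g' ≠ g → ∀ m ∈ g.support, ∀ m', IsLpp g' m' → ¬ m' ≤ m) ∧
    Ideal.span (G : Set (MvPolynomial (Fin n) K)) = I

/-- `Cs` is the W-characteristic set of `I`: the minimal triangular set contained in the
reduced plex Gröbner basis `G` of `I`, i.e. for each class realized in `G`, `Cs` contains
the element of that class whose leading monomial is minimal w.r.t. the plex order, the
elements being ordered by increasing class (equivalently, by the plex order). -/
def IsWCharSet (I : Ideal (MvPolynomial (Fin n) K)) (Cs : List (MvPolynomial (Fin n) K)) :
    Prop :=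
  ∃ G : Finset (MvPolynomial (Fin n) K), IsReducedGB I G ∧
    (Cs.Chain' fun A B => cls A < cls B) ∧
    (∀ c ∈ Cs, c ∈ G) ∧
    (∀ g ∈ G, ∃ c ∈ Cs, cls c = cls g) ∧
    ∀ c ∈ Cs, ∀ g ∈ G, cls g = cls c → g ≠ c →
      ∃ mc mg, IsLpp c mc ∧ IsLpp g mg ∧ plexLT mc mg

/-- The set of common zeros of a set `S` of polynomials over `k`, taken in `Kc ^ n`
for an extension `Kc` of `k`. -/
def zeroSet {k : Type*} [Field k] (Kc : Type*) [CommRing Kc] [Algebra k Kc]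
    (S : Set (MvPolynomial (Fin n) k)) : Set (Fin n → Kc) :=
  {a | ∀ p ∈ S, MvPolynomial.aeval a p = 0}


/-! ### Auxiliary lemmas -/

section Aux

variable {n : ℕ} {K : Type*} [Field K]

lemma exp_le_degreeOf {f : MvPolynomial (Fin n) K} {m : Fin n →₀ ℕ}
    (hm : m ∈ f.support) (q : Fin n) : m q ≤ f.degreeOf q := by
  rw [degreeOf_eq_sup]
  exact Finset.le_sup (f := fun m => m q) hm

lemma coeff_coefv (i : Fin n) (e : ℕ) (f : MvPolynomial (Fin n) K) (mo : Fin n →₀ ℕ) :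
    (coefv i e f).coeff mo = if mo i = 0 then f.coeff (mo + Finsupp.single i e) else 0 := by
  classical
  rw [coefv, coeff_sum]
  split_ifs with h0
  · rw [Finset.sum_eq_single (mo + Finsupp.single i e)]
    · rw [coeff_monomial, if_pos]
      ext j
      rw [Finsupp.erase_apply]
      by_cases hj : j = i
      · subst hj; simp [h0]
      · simp [Finsupp.single_apply, Ne.symm hj, hj]
    · intro b hb hne
      rw [coeff_monomial, if_neg]
      intro heq
      apply hne
      have hbi : b i = e := (Finset.mem_filter.mp hb).2
      have := Finsupp.erase_add_single i b
      rw [heq, hbi] at this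
      exact this.symm
    · intro hnot
      rw [coeff_monomial]
      split_ifs with heq
      · by_contra hc
        apply hnot
        refine Finset.mem_filter.mpr ⟨mem_support_iff.mpr hc, ?_⟩
        simp [h0]
      · rfl
  · refine Finset.sum_eq_zero fun b hb => ?_
    rw [coeff_monomial, if_neg]
    intro heq
    apply h0
    have : (Finsupp.erase i b) i = 0 := by simp [Finsupp.erase_apply]
    rw [heq] at this
    exact this

lemma degreeOf_coefv_le {i q : Fin n} (hq : q ≠ i) (e : ℕ) (f : MvPolynomial (Fin n) K) :
    (coefv i e f).degreeOf q ≤ f.degreeOf q := by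
  rw [degreeOf_le_iff]
  intro m hm
  have hc := mem_support_iff.mp hm
  rw [coeff_coefv] at hc
  by_cases h0 : m i = 0
  · rw [if_pos h0] at hc
    have := exp_le_degreeOf (mem_support_iff.mpr hc) q
    simpa [Finsupp.single_apply, Ne.symm hq] using this
  · rw [if_neg h0] at hc
    exact absurd rfl hc

lemma degreeOf_coefv_self (i : Fin n) (e : ℕ) (f : MvPolynomial (Fin n) K) :
    (coefv i e f).degreeOf i = 0 := by
  rw [Nat.le_zero.symm, degreeOf_le_iff]
  intro m hm
  have hc := mem_support_iff.mp hm
  rw [coeff_coefv] at hc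
  by_contra h0
  rw [if_neg (by omega)] at hc
  exact hc rfl

lemma coeff_coefv_mul_X_pow (i : Fin n) (e : ℕ) (f : MvPolynomial (Fin n) K) (mo : Fin n →₀ ℕ) :
    coeff mo (coefv i e f * X i ^ e) = if mo i = e then coeff mo f else 0 := by
  classical
  rw [X_pow_eq_monomial, coeff_mul_monomial']
  by_cases hle : e ≤ mo i
  · rw [if_pos (Finsupp.single_le_iff.mpr hle), coeff_coefv, mul_one]
    have hsub : (mo - Finsupp.single i e) i = mo i - e := by
      simp [Finsupp.tsub_apply, Finsupp.single_apply]
    by_cases heq : mo i = e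
    · rw [if_pos heq, if_pos (by omega), tsub_add_cancel_of_le (Finsupp.single_le_iff.mpr hle)]
    · rw [if_neg heq, if_neg (by omega)]
  · rw [if_neg (fun h => hle (Finsupp.single_le_iff.mp h)), if_neg (by omega)]

lemma coeff_sub_part {i : Fin n} {d : ℕ} {f : MvPolynomial (Fin n) K}
    (hd : f.degreeOf i ≤ d) {mo : Fin n →₀ ℕ} (h : d ≤ mo i) :
    coeff mo (f - coefv i d f * X i ^ d) = 0 := by
  rw [coeff_sub, coeff_coefv_mul_X_pow]
  rcases eq_or_lt_of_le h with heq | hlt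
  · rw [if_pos heq.symm, sub_self]
  · rw [if_neg (by omega)]
    have : coeff mo f = 0 := by
      by_contra hc
      have := exp_le_degreeOf (mem_support_iff.mpr hc) i
      omega
    rw [this, sub_zero]

lemma degreeOf_sub_part_le (i : Fin n) {d : ℕ} (f : MvPolynomial (Fin n) K)
    (hd : f.degreeOf i ≤ d) :
    (f - coefv i d f * X i ^ d).degreeOf i ≤ d - 1 := by
  rw [degreeOf_le_iff]
  intro m hm
  have hc := mem_support_iff.mp hm
  by_contra hgt
  exact hc (coeff_sub_part hd (by omega))

lemma degreeOf_sub_le' (q : Fin n) (a b : MvPolynomial (Fin n) K) :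
    (a - b).degreeOf q ≤ max (a.degreeOf q) (b.degreeOf q) := by
  have hneg : (-b).degreeOf q = b.degreeOf q := by
    rw [degreeOf_eq_sup, degreeOf_eq_sup, support_neg]
  calc (a - b).degreeOf q = (a + (-b)).degreeOf q := by rw [sub_eq_add_neg]
    _ ≤ max (a.degreeOf q) ((-b).degreeOf q) := degreeOf_add_le q a (-b)
    _ = max (a.degreeOf q) (b.degreeOf q) := by rw [hneg]

lemma degreeOf_X_pow_le (i q : Fin n) (e : ℕ) :
    (X (R := K) i ^ e).degreeOf q ≤ e := by
  rw [degreeOf_le_iff]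
  intro m hm
  rw [support_X_pow, Finset.mem_singleton] at hm
  subst hm
  simp [Finsupp.single_apply]
  split <;> omega

lemma degreeOf_X_pow_ne {i q : Fin n} (hq : q ≠ i) (e : ℕ) :
    (X (R := K) i ^ e).degreeOf q = 0 := by
  rw [Nat.le_zero.symm, degreeOf_le_iff]
  intro m hm
  rw [support_X_pow, Finset.mem_singleton] at hm
  subst hm
  simp [Finsupp.single_apply, Ne.symm hq]

lemma reduction_step (i : Fin n) (f c : MvPolynomial (Fin n) K)
    (hm1 : 1 ≤ c.degreeOf i) (hd : c.degreeOf i ≤ f.degreeOf i) :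
    (coefv i (c.degreeOf i) c * f
      - coefv i (f.degreeOf i) f * X i ^ (f.degreeOf i - c.degreeOf i) * c).degreeOf i
      ≤ f.degreeOf i - 1 := by
  set m := c.degreeOf i with hmdef
  set d := f.degreeOf i with hddef
  set L := coefv i m c with hL
  set H := coefv i d f with hH
  have hdm : d - m + m = d := Nat.sub_add_cancel hd
  have hXX : (X (R := K) i ^ (d - m)) * X i ^ m = X i ^ d := by rw [← pow_add, hdm]
  have key : L * f - H * X i ^ (d - m) * c
      = L * (f - H * X i ^ d) - H * X i ^ (d - m) * (c - L * X i ^ m) := by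
    have h2 : H * X i ^ (d - m) * (L * X (R := K) i ^ m) = L * (H * X i ^ d) := by
      rw [← hXX]; ring
    rw [mul_sub, mul_sub, h2]; ring
  rw [key]
  refine (degreeOf_sub_le' i _ _).trans (max_le ?_ ?_)
  · refine (degreeOf_mul_le i _ _).trans ?_
    have h1 : L.degreeOf i = 0 := degreeOf_coefv_self i m c
    have h2 : (f - H * X i ^ d).degreeOf i ≤ d - 1 := degreeOf_sub_part_le i f le_rfl
    omega
  · refine (degreeOf_mul_le i _ _).trans ?_
    have h1 : (H * X i ^ (d - m)).degreeOf i ≤ d - m := by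
      refine (degreeOf_mul_le i _ _).trans ?_
      have ha1 : H.degreeOf i = 0 := degreeOf_coefv_self i d f
      have ha2 := degreeOf_X_pow_le (K := K) i i (d - m)
      omega
    have h2 : (c - L * X i ^ m).degreeOf i ≤ m - 1 := degreeOf_sub_part_le i c le_rfl
    omega

lemma reduction_step_other {i q : Fin n} (hq : q ≠ i) (f c : MvPolynomial (Fin n) K)
    (hc : c.degreeOf q = 0) :
    (coefv i (c.degreeOf i) c * f
      - coefv i (f.degreeOf i) f * X i ^ (f.degreeOf i - c.degreeOf i) * c).degreeOf q
      ≤ f.degreeOf q := by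
  refine (degreeOf_sub_le' q _ _).trans (max_le ?_ ?_)
  · refine (degreeOf_mul_le q _ _).trans ?_
    have h1 : (coefv i (c.degreeOf i) c).degreeOf q ≤ c.degreeOf q := degreeOf_coefv_le hq _ c
    omega
  · refine (degreeOf_mul_le q _ _).trans ?_
    have h1 : (coefv i (f.degreeOf i) f * X i ^ (f.degreeOf i - c.degreeOf i)).degreeOf q
        ≤ f.degreeOf q := by
      refine (degreeOf_mul_le q _ _).trans ?_
      have h2 : (coefv i (f.degreeOf i) f).degreeOf q ≤ f.degreeOf q := degreeOf_coefv_le hq _ f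
      have h3 := degreeOf_X_pow_ne (K := K) hq (f.degreeOf i - c.degreeOf i)
      omega
    omega

/-! ### Lemmas about the plex order -/

lemma plexLT_trans {a b c : Fin n →₀ ℕ} (h1 : plexLT a b) (h2 : plexLT b c) : plexLT a c := by
  obtain ⟨k1, hk1, hj1⟩ := h1
  obtain ⟨k2, hk2, hj2⟩ := h2
  rcases lt_trichotomy k1 k2 with h | h | h
  · exact ⟨k2, by rw [hj1 k2 h]; exact hk2, fun j hj => by rw [hj1 j (h.trans hj), hj2 j hj]⟩
  · subst h
    exact ⟨k1, hk1.trans hk2, fun j hj => by rw [hj1 j hj, hj2 j hj]⟩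
  · exact ⟨k1, by rw [← hj2 k1 h]; exact hk1, fun j hj => by rw [hj1 j hj, hj2 j (h.trans hj)]⟩

lemma plexLT_asymm {a b : Fin n →₀ ℕ} (h1 : plexLT a b) (h2 : plexLT b a) : False := by
  obtain ⟨k1, hk1, hj1⟩ := h1
  obtain ⟨k2, hk2, hj2⟩ := h2
  rcases lt_trichotomy k1 k2 with h | h | h
  · have := hj2 k2  -- unused
    have := hj1 k2 h
    omega
  · subst h; omega
  · have := hj2 k1 h
    omega

lemma plexLT_irrefl (a : Fin n →₀ ℕ) (h : plexLT a a) : False := plexLT_asymm h h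

lemma plexLT_total {a b : Fin n →₀ ℕ} (h : a ≠ b) : plexLT a b ∨ plexLT b a := by
  classical
  set s : Finset (Fin n) := (a.support ∪ b.support).filter (fun j => a j ≠ b j) with hs
  have hsne : s.Nonempty := by
    obtain ⟨j, hj⟩ := Finsupp.ne_iff.mp h
    refine ⟨j, Finset.mem_filter.mpr ⟨?_, hj⟩⟩
    rw [Finset.mem_union, Finsupp.mem_support_iff, Finsupp.mem_support_iff]
    by_contra hc
    push_neg at hc
    rw [hc.1, hc.2] at hj
    exact hj rfl
  set K' := s.max' hsne with hK
  have hKmem := s.max'_mem hsne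
  have hKne : a K' ≠ b K' := (Finset.mem_filter.mp hKmem).2
  have hjeq : ∀ j, K' < j → a j = b j := by
    intro j hj
    by_contra hc
    have hjs : j ∈ s := by
      refine Finset.mem_filter.mpr ⟨?_, hc⟩
      rw [Finset.mem_union, Finsupp.mem_support_iff, Finsupp.mem_support_iff]
      by_contra h2
      push_neg at h2
      rw [h2.1, h2.2] at hc
      exact hc rfl
    exact absurd (Finset.le_max' s j hjs) (not_le.mpr hj)
  rcases lt_or_gt_of_ne hKne with h1 | h1
  · exact Or.inl ⟨K', h1, hjeq⟩
  · exact Or.inr ⟨K', h1, fun j hj => (hjeq j hj).symm⟩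

lemma exists_isLpp {f : MvPolynomial (Fin n) K} (hf : f ≠ 0) : ∃ m, IsLpp f m := by
  classical
  have main : ∀ s : Finset (Fin n →₀ ℕ), s.Nonempty →
      ∃ m ∈ s, ∀ m' ∈ s, m' ≠ m → plexLT m' m := by
    intro s
    induction s using Finset.induction_on with
    | empty => intro h; exact absurd h (by simp)
    | insert a t ha ih =>
      intro _
      by_cases ht : t.Nonempty
      · obtain ⟨m, hm, hmax⟩ := ih ht
        have hne : a ≠ m := fun h => ha (h ▸ hm)
        rcases plexLT_total hne with h1 | h1
        · refine ⟨m, Finset.mem_insert_of_mem hm, ?_⟩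
          intro m' hm' hne'
          rcases Finset.mem_insert.mp hm' with rfl | hm't
          · exact h1
          · exact hmax m' hm't hne'
        · refine ⟨a, Finset.mem_insert_self a t, ?_⟩
          intro m' hm' hne'
          rcases Finset.mem_insert.mp hm' with rfl | hm't
          · exact absurd rfl hne'
          · rcases eq_or_ne m' m with rfl | hne''
            · exact h1
            · exact plexLT_trans (hmax m' hm't hne'') h1
      · rw [Finset.not_nonempty_iff_eq_empty] at ht
        subst ht
        refine ⟨a, Finset.mem_insert_self a ∅, ?_⟩
        intro m' hm' hne'
        rcases Finset.mem_insert.mp hm' with rfl | hm't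
        · exact absurd rfl hne'
        · exact absurd hm't (by simp)
  obtain ⟨m, hm, hmax⟩ := main f.support (support_nonempty.mpr hf)
  exact ⟨m, hm, hmax⟩

lemma isLpp_unique {f : MvPolynomial (Fin n) K} {m m' : Fin n →₀ ℕ}
    (h : IsLpp f m) (h' : IsLpp f m') : m = m' := by
  by_contra hne
  exact plexLT_asymm (h'.2 m h.1 hne) (h.2 m' h'.1 (Ne.symm hne))

/-! ### Lemmas about `cls` and leading variables -/

lemma cls_eq_max' {c : MvPolynomial (Fin n) K} (h : c.vars.Nonempty) :
    cls c = (c.vars.max' h : ℕ) + 1 := by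
  rw [cls]
  refine le_antisymm (Finset.sup_le fun i hi => ?_)
    (Finset.le_sup (f := fun i : Fin n => (i : ℕ) + 1) (c.vars.max'_mem h))
  have h2 : (i : ℕ) ≤ ((c.vars.max' h : Fin n) : ℕ) := Finset.le_max' c.vars i hi
  omega

lemma one_le_degreeOf_of_mem_vars {c : MvPolynomial (Fin n) K} {q : Fin n}
    (h : q ∈ c.vars) : 1 ≤ c.degreeOf q := by
  obtain ⟨mo, hmo, hq⟩ := (mem_vars q).mp h
  have h1 := exp_le_degreeOf hmo q
  have h2 := Finsupp.mem_support_iff.mp hq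
  omega

lemma degreeOf_eq_zero_of_not_mem_vars {c : MvPolynomial (Fin n) K} {q : Fin n}
    (h : q ∉ c.vars) : c.degreeOf q = 0 := by
  rw [Nat.le_zero.symm, degreeOf_le_iff]
  intro mo hmo
  by_contra hc
  exact h ((mem_vars q).mpr ⟨mo, hmo, Finsupp.mem_support_iff.mpr (by omega)⟩)

lemma degreeOf_lv_eq {c : MvPolynomial (Fin n) K} {mc : Fin n →₀ ℕ}
    (h : IsLpp c mc) (hv : c.vars.Nonempty) :
    c.degreeOf (c.vars.max' hv) = mc (c.vars.max' hv) := by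
  set p := c.vars.max' hv with hp
  refine le_antisymm ?_ (exp_le_degreeOf h.1 p)
  rw [degreeOf_le_iff]
  intro mo hmo
  rcases eq_or_ne mo mc with rfl | hne
  · exact le_rfl
  · obtain ⟨k, hk1, hk2⟩ := h.2 mo hmo hne
    rcases lt_trichotomy k p with hlt | heq | hgt
    · rw [hk2 p hlt]
    · subst heq; omega
    · exfalso
      have hkv : k ∈ c.vars := (mem_vars k).mpr ⟨mc, h.1, Finsupp.mem_support_iff.mpr (by omega)⟩
      exact absurd (Finset.le_max' c.vars k hkv) (not_le.mpr hgt)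

lemma lpp_exp_le_of_plexLT {c g : MvPolynomial (Fin n) K} {mc mg : Fin n →₀ ℕ}
    (hc : IsLpp c mc) (hg : IsLpp g mg) (hlt : plexLT mc mg)
    (hvc : c.vars.Nonempty) (hvg : g.vars.Nonempty)
    (hmax : c.vars.max' hvc = g.vars.max' hvg) :
    mc (c.vars.max' hvc) ≤ mg (c.vars.max' hvc) := by
  set p := c.vars.max' hvc with hp
  obtain ⟨k, hk1, hk2⟩ := hlt
  rcases lt_trichotomy k p with h | h | h
  · rw [hk2 p h]
  · subst h; omega
  · exfalso
    have hkv : k ∈ g.vars := (mem_vars k).mpr ⟨mg, hg.1, Finsupp.mem_support_iff.mpr (by omega)⟩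
    have := Finset.le_max' g.vars k hkv
    rw [← hmax] at this
    exact absurd this (not_le.mpr h)

end Aux

/-! ### The main engine -/

lemma engine {n : ℕ} {k : Type*} [Field k] {Kc : Type*} [Field Kc] [Algebra k Kc]
    {I : Ideal (MvPolynomial (Fin n) k)} (hI : I ≠ ⊤)
    {G : Finset (MvPolynomial (Fin n) k)} (hGB : IsReducedGB I G)
    {Cs : List (MvPolynomial (Fin n) k)}
    (hCG : ∀ c ∈ Cs, c ∈ G)
    (hchain : List.Chain' (fun A B => cls A < cls B) Cs)
    (hcover : ∀ g ∈ G, ∃ c ∈ Cs, cls c = cls g)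
    (hmin : ∀ c ∈ Cs, ∀ g ∈ G, cls g = cls c → g ≠ c →
      ∃ mc mg, IsLpp c mc ∧ IsLpp g mg ∧ plexLT mc mg)
    (a : Fin n → Kc) (hza : ∀ c ∈ Cs, (aeval a) c = 0)
    (hia : ∀ c ∈ Cs, (aeval a) (ini c) ≠ 0) :
    ∀ f ∈ I, aeval a f = 0 := by
  classical
  -- every element of G is nonconstant
  have hGnc : ∀ g ∈ G, g.vars.Nonempty := by
    intro g hg
    by_contra hv
    obtain ⟨hgI, hg0, hmonic⟩ := hGB.1 g hg
    have hsupp : ∀ mo ∈ g.support, mo = 0 := by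
      intro mo hmo
      by_contra hne
      obtain ⟨q, hq⟩ := Finsupp.ne_iff.mp hne
      simp only [Finsupp.coe_zero, Pi.zero_apply] at hq
      exact hv ⟨q, (mem_vars q).mpr ⟨mo, hmo, Finsupp.mem_support_iff.mpr hq⟩⟩
    obtain ⟨m0, hm0⟩ := support_nonempty.mpr hg0
    have hm00 : (0 : Fin n →₀ ℕ) ∈ g.support := hsupp m0 hm0 ▸ hm0
    have hlpp : IsLpp g 0 := ⟨hm00, fun m' hm' hne => absurd (hsupp m' hm') hne⟩
    have h1 : g.coeff 0 = 1 := hmonic 0 hlpp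
    have hgone : g = 1 := by
      apply MvPolynomial.ext
      intro mo
      by_cases h : mo = 0
      · subst h; rw [h1, coeff_one, if_pos rfl]
      · rw [coeff_one, if_neg (fun hh => h hh.symm)]
        by_contra hc
        exact h (hsupp mo (mem_support_iff.mpr hc))
    exact hI ((Ideal.eq_top_iff_one I).mpr (hgone ▸ hgI))
  haveI : IsTrans (MvPolynomial (Fin n) k) (fun A B => cls A < cls B) :=
    ⟨fun _ _ _ h1 h2 => h1.trans h2⟩
  have hget := List.pairwise_iff_get.mp (List.isChain_iff_pairwise.mp hchain)
  have main : ∀ m : ℕ, ∀ f ∈ I, aeval a f ≠ 0 →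
      (∀ i : Fin Cs.length, m ≤ (i : ℕ) →
        degLv f (Cs.get i) < degLv (Cs.get i) (Cs.get i)) → False := by
    intro m
    induction m with
    | zero =>
      intro f hfI hfa hred
      have hf0 : f ≠ 0 := fun h => hfa (by rw [h, map_zero])
      obtain ⟨g, hgG, mg, mf, hlppg, hlppf, hle⟩ := hGB.2.1 f hfI hf0
      have hvg := hGnc g hgG
      obtain ⟨c, hcCs, hclseq⟩ := hcover g hgG
      have hvc := hGnc c (hCG c hcCs)
      have hmaxeq : c.vars.max' hvc = g.vars.max' hvg := by
        have h1 := cls_eq_max' hvc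
        have h2 := cls_eq_max' hvg
        exact Fin.ext (by omega)
      set p := c.vars.max' hvc with hpdef
      obtain ⟨iF, hiF⟩ := List.mem_iff_get.mp hcCs
      have hred' := hred iF (Nat.zero_le _)
      rw [hiF] at hred'
      simp only [degLv, dif_pos hvc] at hred'
      rw [← hpdef] at hred'
      obtain ⟨mc, hmc⟩ := exists_isLpp ((hGB.1 c (hCG c hcCs)).2.1)
      have h1 : c.degreeOf p = mc p := degreeOf_lv_eq hmc hvc
      have h2 : mc p ≤ mg p := by
        rcases eq_or_ne g c with rfl | hne
        · rw [isLpp_unique hmc hlppg]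
        · obtain ⟨mc', mg', hmc', hmg', hplex⟩ := hmin c hcCs g hgG hclseq.symm hne
          have h3 := lpp_exp_le_of_plexLT hmc' hmg' hplex hvc hvg hmaxeq
          rwa [isLpp_unique hmc' hmc, isLpp_unique hmg' hlppg] at h3
      have h3 : mg p ≤ mf p := Finsupp.le_def.mp hle p
      have h4 : mf p ≤ f.degreeOf p := exp_le_degreeOf hlppf.1 p
      omega
    | succ m ih =>
      by_cases hm : m < Cs.length
      · set c := Cs.get ⟨m, hm⟩ with hcdef
        have hcCs : c ∈ Cs := List.get_mem Cs ⟨m, hm⟩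
        have hcG := hCG c hcCs
        have hvc : c.vars.Nonempty := hGnc c hcG
        set p := c.vars.max' hvc with hpdef
        have hm1 : 1 ≤ c.degreeOf p := one_le_degreeOf_of_mem_vars (c.vars.max'_mem hvc)
        have hcI : c ∈ I := (hGB.1 c hcG).1
        have hini_eq : ini c = coefv p (c.degreeOf p) c := by
          rw [ini, dif_pos hvc, lcv]
        have inner : ∀ D : ℕ, ∀ f ∈ I, aeval a f ≠ 0 →
            (∀ i : Fin Cs.length, m + 1 ≤ (i : ℕ) →
              degLv f (Cs.get i) < degLv (Cs.get i) (Cs.get i)) →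
            f.degreeOf p ≤ D → False := by
          intro D
          induction D using Nat.strong_induction_on with
          | _ D ihD =>
          intro f hfI hfa hred hD
          by_cases hlt : f.degreeOf p < c.degreeOf p
          · refine ih f hfI hfa fun i hmi => ?_
            rcases eq_or_lt_of_le hmi with heq | hlt2
            · have hieq : Cs.get i = c := by
                rw [hcdef]; congr 1; exact Fin.ext heq.symm
              rw [hieq]
              simp only [degLv, dif_pos hvc]
              rw [← hpdef]
              exact hlt
            · exact hred i hlt2
          · push_neg at hlt
            set f1 := coefv p (c.degreeOf p) c * f
                - coefv p (f.degreeOf p) f * X p ^ (f.degreeOf p - c.degreeOf p) * c with hf1def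
            have hf1I : f1 ∈ I :=
              Ideal.sub_mem I (Ideal.mul_mem_left I _ hfI) (Ideal.mul_mem_left I _ hcI)
            have hc0 : aeval a c = 0 := hza c hcCs
            have hLa : aeval a (coefv p (c.degreeOf p) c) ≠ 0 := by
              have h := hia c hcCs
              rwa [hini_eq] at h
            have hf1a : aeval a f1 ≠ 0 := by
              rw [hf1def, map_sub, map_mul, map_mul, hc0, mul_zero, sub_zero]
              exact mul_ne_zero hLa hfa
            have hdeg1 : f1.degreeOf p ≤ f.degreeOf p - 1 := reduction_step p f c hm1 hlt
            have hred1 : ∀ i : Fin Cs.length, m + 1 ≤ (i : ℕ) →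
                degLv f1 (Cs.get i) < degLv (Cs.get i) (Cs.get i) := by
              intro i hi
              have hvi : (Cs.get i).vars.Nonempty := hGnc _ (hCG _ (List.get_mem Cs i))
              set q := (Cs.get i).vars.max' hvi with hqdef
              have hclslt : cls c < cls (Cs.get i) := by
                refine hget ⟨m, hm⟩ i ?_
                rw [Fin.lt_def]
                exact hi
              have hpq : (p : ℕ) < (q : ℕ) := by
                have e1 := cls_eq_max' hvc
                have e2 := cls_eq_max' hvi
                rw [← hpdef] at e1
                rw [← hqdef] at e2
                omega
              have hqp : q ≠ p := fun h => by rw [h] at hpq; omega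
              have hdegqc : c.degreeOf q = 0 := by
                refine degreeOf_eq_zero_of_not_mem_vars fun hqv => ?_
                have hle' := Finset.le_max' c.vars q hqv
                rw [← hpdef] at hle'
                exact absurd hle' (not_le.mpr (by rw [Fin.lt_def]; exact hpq))
              have hstep := reduction_step_other (i := p) (q := q) hqp f c hdegqc
              have hredf := hred i hi
              simp only [degLv, dif_pos hvi] at hredf ⊢
              rw [← hqdef] at hredf ⊢
              calc f1.degreeOf q ≤ f.degreeOf q := hstep
                _ < _ := hredf
            have hD1 : 0 < D := by omega
            exact ihD (D - 1) (by omega) f1 hf1I hf1a hred1 (by omega)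
        intro f hfI hfa hred
        exact inner (f.degreeOf p) f hfI hfa hred le_rfl
      · intro f hfI hfa hred
        exact ih f hfI hfa fun i hmi => absurd (lt_of_le_of_lt hmi i.isLt) hm
  intro f hfI
  by_contra hfa
  exact main Cs.length f hfI hfa fun i hi => absurd (lt_of_le_of_lt hi i.isLt) (lt_irrefl _)

/-- Proposition charpro (c). Let `C = [C_1, …, C_r]` be the
W-characteristic set of `⟨P⟩` with `I_i = ini(C_i)`. Then
`Zero(C) \ Zero({I_1⋯I_r}) ⊆ Zero(P) ⊆ Zero(C)`, the zeros being taken in `Kc^n` for an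
algebraically closed extension `Kc` of the base field. -/
theorem statement8 {n : ℕ} {k : Type*} [Field k]
    (Kc : Type*) [Field Kc] [IsAlgClosed Kc] [Algebra k Kc]
    (P : Finset (MvPolynomial (Fin n) k)) (hne : P.Nonempty) (h0 : ∀ p ∈ P, p ≠ 0)
    (hproper : Ideal.span (P : Set (MvPolynomial (Fin n) k)) ≠ ⊤)
    (Cs : List (MvPolynomial (Fin n) k))
    (hW : IsWCharSet (Ideal.span (P : Set (MvPolynomial (Fin n) k))) Cs) :
    zeroSet Kc {c | c ∈ Cs} \ zeroSet Kc {(Cs.map ini).prod}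
        ⊆ zeroSet Kc (P : Set (MvPolynomial (Fin n) k)) ∧
      zeroSet Kc (P : Set (MvPolynomial (Fin n) k)) ⊆ zeroSet Kc {c | c ∈ Cs} := by
  classical
  obtain ⟨G, hGB, hchain, hCG, hcover, hmin⟩ := hW
  constructor
  · rintro x ⟨hx1, hx2⟩
    have hprodne : aeval x ((Cs.map ini).prod) ≠ 0 := by
      intro h0
      refine hx2 fun q hq => ?_
      rw [Set.mem_singleton_iff] at hq
      rw [hq]
      exact h0
    have hia : ∀ c ∈ Cs, aeval x (ini c) ≠ 0 := by
      intro c hc h0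
      apply hprodne
      rw [map_list_prod]
      refine List.prod_eq_zero ?_
      rw [List.map_map]
      exact List.mem_map.mpr ⟨c, hc, by simp [Function.comp, h0]⟩
    have hza : ∀ c ∈ Cs, aeval x c = 0 := fun c hc => hx1 c hc
    intro p hp
    exact engine hproper hGB hCG hchain hcover hmin x hza hia p (Ideal.subset_span hp)
  · intro x hx c hc
    have hcI : c ∈ Ideal.span (P : Set (MvPolynomial (Fin n) k)) := (hGB.1 c (hCG c hc)).1
    have hker : Ideal.span (P : Set (MvPolynomial (Fin n) k)) ≤
        RingHom.ker (aeval x : MvPolynomial (Fin n) k →ₐ[k] Kc) := by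
      rw [Ideal.span_le]
      intro q hq
      exact RingHom.mem_ker.mpr (hx q hq)
    exact RingHom.mem_ker.mp (hker hcI)

end CharSets
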